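/- Let n ≥ 0 be an integer and let S ⊆ ℝ be a set such that for all x ∈ ℝ, x ∈ S if and only if x + 1 ∈ S, and such that S ∩ [0,1) has exactly n+1 elements. If s : ℤ → ℝ is a strictly increasing function whose image is S, then s(k + n + 1) = s(k) + 1 for every k ∈ ℤ. -/

import Mathlib

private lemma shiftZ (S : Set ℝ) (hshift : ∀ x : ℝ, x ∈ S ↔ x + 1 ∈ S) :
    ∀ (m : ℤ) (x : ℝ), x ∈ S ↔ x + m ∈ S := by
  intro m
  induction m using Int.induction_on with
  | zero => simp
  | succ i ih =>
      intro x
      rw [ih x, show x + (((i : ℤ) + 1 : ℤ) : ℝ) = x + ((i : ℤ) : ℝ) + 1 by push_cast; ring]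
      exact hshift _
  | pred i ih =>
      intro x
      rw [ih x, show x + ((-(i : ℤ) : ℤ) : ℝ) = x + ((-(i : ℤ) - 1 : ℤ) : ℝ) + 1 by push_cast; ring]
      exact (hshift _).symm

private lemma cardIco (n : ℕ) (S : Set ℝ) (hshift : ∀ x : ℝ, x ∈ S ↔ x + 1 ∈ S)
    (hcard : (S ∩ Set.Ico (0 : ℝ) 1).ncard = n + 1) (a : ℝ) :
    (S ∩ Set.Ico a (a + 1)).ncard = n + 1 := by
  have hZ := shiftZ S hshift
  have hinj : Set.InjOn Int.fract (S ∩ Set.Ico a (a + 1)) := by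
    rintro x ⟨-, hx0, hx1⟩ y ⟨-, hy0, hy1⟩ hxy
    unfold Int.fract at hxy
    have heq : (((⌊x⌋ - ⌊y⌋ : ℤ) : ℝ)) = x - y := by push_cast; linarith
    have habs : |x - y| < 1 := by rw [abs_lt]; constructor <;> linarith
    rw [← heq] at habs
    have h1 : |(⌊x⌋ - ⌊y⌋ : ℤ)| < 1 := by exact_mod_cast habs
    have h0 : (⌊x⌋ - ⌊y⌋ : ℤ) = 0 := Int.abs_lt_one_iff.mp h1
    have : ((⌊x⌋ : ℝ)) = ⌊y⌋ := by exact_mod_cast (by omega : ⌊x⌋ = ⌊y⌋)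
    linarith [hxy]
  have himg : Int.fract '' (S ∩ Set.Ico a (a + 1)) = S ∩ Set.Ico (0 : ℝ) 1 := by
    ext y
    constructor
    · rintro ⟨x, ⟨hxS, -, -⟩, rfl⟩
      refine ⟨?_, Int.fract_nonneg x, Int.fract_lt_one x⟩
      have := (hZ (-⌊x⌋) x).mp hxS
      simpa [Int.fract, sub_eq_add_neg] using this
    · rintro ⟨hyS, hy0, hy1⟩
      refine ⟨y + ⌈a - y⌉, ⟨(hZ ⌈a - y⌉ y).mp hyS, ?_, ?_⟩, ?_⟩
      · linarith [Int.le_ceil (a - y)]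
      · linarith [Int.ceil_lt_add_one (a - y)]
      · rw [Int.fract_add_intCast, Int.fract_eq_self.mpr ⟨hy0, hy1⟩]
  calc (S ∩ Set.Ico a (a + 1)).ncard
      = (Int.fract '' (S ∩ Set.Ico a (a + 1))).ncard := (Set.ncard_image_of_injOn hinj).symm
    _ = n + 1 := by rw [himg, hcard]

/-- Shift property of the action spectrum of a non-degenerate rotation of `ℂPⁿ`:
if `S ⊆ ℝ` is invariant under translation by `1` and meets `[0,1)` in exactly `n+1`
points, then any strictly increasing enumeration `s : ℤ → ℝ` of `S` satisfies
`s(k + n + 1) = s(k) + 1`. -/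
theorem spectrum_shift (n : ℕ) (S : Set ℝ)
    (hshift : ∀ x : ℝ, x ∈ S ↔ x + 1 ∈ S)
    (hcard : (S ∩ Set.Ico (0 : ℝ) 1).ncard = n + 1)
    (s : ℤ → ℝ) (hmono : StrictMono s) (hrange : Set.range s = S) :
    ∀ k : ℤ, s (k + (n + 1)) = s k + 1 := by
  intro k
  -- s k + 1 ∈ S, get j
  have hskS : s k ∈ S := by rw [← hrange]; exact ⟨k, rfl⟩
  have hsk1S : s k + 1 ∈ S := (hshift (s k)).mp hskS
  obtain ⟨j, hj⟩ : ∃ j, s j = s k + 1 := by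
    rw [← hrange] at hsk1S; exact hsk1S
  have hkj : k < j := hmono.lt_iff_lt.mp (by rw [hj]; linarith)
  -- S ∩ Ico (s k) (s k + 1) = s '' Ico k j
  have hset : S ∩ Set.Ico (s k) (s k + 1) = s '' Set.Ico k j := by
    ext x
    constructor
    · rintro ⟨hxS, hx0, hx1⟩
      rw [← hrange] at hxS
      obtain ⟨i, rfl⟩ := hxS
      refine ⟨i, ⟨?_, ?_⟩, rfl⟩
      · exact hmono.le_iff_le.mp hx0
      · exact hmono.lt_iff_lt.mp (by rw [hj]; exact hx1)
    · rintro ⟨i, ⟨hki, hij⟩, rfl⟩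
      refine ⟨by rw [← hrange]; exact ⟨i, rfl⟩, hmono.monotone hki, ?_⟩
      rw [← hj]; exact hmono hij
  have hcount : (S ∩ Set.Ico (s k) (s k + 1)).ncard = n + 1 := cardIco n S hshift hcard (s k)
  have himgcard : (s '' Set.Ico k j).ncard = (Set.Ico k j).ncard :=
    Set.ncard_image_of_injective _ hmono.injective
  have hIco : (Set.Ico k j).ncard = (j - k).toNat := by
    rw [← Finset.coe_Ico, Set.ncard_coe_finset, Int.card_Ico]
  have : (j - k).toNat = n + 1 := by
    rw [← hIco, ← himgcard, ← hset, hcount]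
  have hjk : j = k + (n + 1) := by omega
  rw [← hjk, hj]
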